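/- The matrix S_a(λ) = T_a(λ) K_a T_a^{t_a}(−λ−ħρ) satisfies the symmetry relation: for all λ avoiding the poles of both sides and with 2λ + ħρ ≠ 0, S_a^{t_a}(λ) = ε S_a(−λ−ħρ) − (θħ/(2λ+ħρ)) (S_a(−λ−ħρ) − S_a(λ)), as operators on ℂ^N ⊗ (ℂ^N)^{⊗ℓ}. -/

import Mathlib

open Matrix Finset

noncomputable section

/-- The permutation operator `P` exchanging the tensor factors `p` and `q`
of `(ℂ^N)^{⊗ I}`, realized on the index type `I → Fin N`. -/
def permOp (N : ℕ) {I : Type} [Fintype I] [DecidableEq I] (p q : I) :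
    Matrix (I → Fin N) (I → Fin N) ℂ :=
  fun f g => if f = g ∘ ⇑(Equiv.swap p q) then 1 else 0

/-- The rational R-matrix `R(λ) = I - (ħ/λ) P` acting on the tensor factors
`p` and `q`. -/
def Rmat (N : ℕ) (hbar : ℂ) {I : Type} [Fintype I] [DecidableEq I] (p q : I)
    (lam : ℂ) : Matrix (I → Fin N) (I → Fin N) ℂ :=
  1 - (hbar / lam) • permOp N p q

/-- The one-site operator acting as the `N × N` matrix `A` on the tensor
factor `p` and as the identity elsewhere. -/
def siteOp (N : ℕ) {I : Type} [Fintype I] [DecidableEq I] (p : I)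
    (A : Matrix (Fin N) (Fin N) ℂ) : Matrix (I → Fin N) (I → Fin N) ℂ :=
  fun f g => if Function.update g p (f p) = f then A (f p) (g p) else 0

/-- Ordinary partial transposition in the tensor factor `p`. -/
def ptransp {N : ℕ} {I : Type} [Fintype I] [DecidableEq I] (p : I)
    (M : Matrix (I → Fin N) (I → Fin N) ℂ) : Matrix (I → Fin N) (I → Fin N) ℂ :=
  fun f g => M (Function.update f p (g p)) (Function.update g p (f p))

/-- The generalized transposition `A ↦ V⁻¹ Aᵀ V` applied in the tensor
factor `p` only. -/
def gtransp {N : ℕ} {I : Type} [Fintype I] [DecidableEq I]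
    (V : Matrix (Fin N) (Fin N) ℂ) (p : I)
    (M : Matrix (I → Fin N) (I → Fin N) ℂ) : Matrix (I → Fin N) (I → Fin N) ℂ :=
  siteOp N p V⁻¹ * ptransp p M * siteOp N p V

/-- The antidiagonal matrix with all antidiagonal entries `1` (the case `θ = 1`). -/
def Vplus (N : ℕ) : Matrix (Fin N) (Fin N) ℂ :=
  fun i j => if (i : ℕ) + (j : ℕ) + 1 = N then 1 else 0

/-- For even `N`, the antidiagonal matrix `antidiag(1,…,1,−1,…,−1)` whose first
`N/2` antidiagonal entries are `1` and last `N/2` are `-1` (the case `θ = -1`). -/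
def Vminus (N : ℕ) : Matrix (Fin N) (Fin N) ℂ :=
  fun i j => if (i : ℕ) + (j : ℕ) + 1 = N then (if 2 * (i : ℕ) < N then 1 else -1) else 0

/-- The monodromy matrix `T_a(λ) = L_{a1}(λ) ⋯ L_{aℓ}(λ)` acting on the
auxiliary space (`Sum.inl ()`) tensored with `ℓ` quantum spaces, where
`L_{an}(λ) = I − ħ P_{an}/(λ + a_n)`. -/
def Tmono (N ℓ : ℕ) (hbar : ℂ) (a : Fin ℓ → ℂ) (lam : ℂ) :
    Matrix ((Unit ⊕ Fin ℓ) → Fin N) ((Unit ⊕ Fin ℓ) → Fin N) ℂ :=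
  ((List.finRange ℓ).map
    (fun n => Rmat N hbar (Sum.inl () : Unit ⊕ Fin ℓ) (Sum.inr n) (lam + a n))).prod

/-- The twisted monodromy matrix `S_a(λ) = T_a(λ) K_a T_a^{t_a}(−λ−ħρ)`,
with `K = diagonal ζ`. -/
def Smat (N ℓ : ℕ) (hbar ρ : ℂ) (a : Fin ℓ → ℂ) (V : Matrix (Fin N) (Fin N) ℂ)
    (ζ : Fin N → ℂ) (lam : ℂ) :
    Matrix ((Unit ⊕ Fin ℓ) → Fin N) ((Unit ⊕ Fin ℓ) → Fin N) ℂ :=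
  Tmono N ℓ hbar a lam * siteOp N (Sum.inl ()) (Matrix.diagonal ζ) *
    gtransp V (Sum.inl ()) (Tmono N ℓ hbar a (-lam - hbar * ρ))

/-- Partial trace over the auxiliary tensor factor. -/
def ptrAux (N ℓ : ℕ)
    (M : Matrix ((Unit ⊕ Fin ℓ) → Fin N) ((Unit ⊕ Fin ℓ) → Fin N) ℂ) :
    Matrix (Fin ℓ → Fin N) (Fin ℓ → Fin N) ℂ :=
  fun f g => ∑ i : Fin N, M (Sum.elim (fun _ => i) f) (Sum.elim (fun _ => i) g)

/-- The transfer matrix `s(λ) = tr_a S_a(λ)`. -/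
def transfer (N ℓ : ℕ) (hbar ρ : ℂ) (a : Fin ℓ → ℂ) (V : Matrix (Fin N) (Fin N) ℂ)
    (ζ : Fin N → ℂ) (lam : ℂ) : Matrix (Fin ℓ → Fin N) (Fin ℓ → Fin N) ℂ :=
  ptrAux N ℓ (Smat N ℓ hbar ρ a V ζ lam)

/-- The operator-valued `(i,j)` entry of a matrix on (auxiliary) ⊗ (ℂ^N)^{⊗ℓ}:
if `M = Σ E_{ij} ⊗ M_{ij}` then `entryOp N ℓ M i j = M_{ij}`. -/
def entryOp (N ℓ : ℕ)
    (M : Matrix ((Unit ⊕ Fin ℓ) → Fin N) ((Unit ⊕ Fin ℓ) → Fin N) ℂ) (i j : Fin N) :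
    Matrix (Fin ℓ → Fin N) (Fin ℓ → Fin N) ℂ :=
  fun f g => M (Sum.elim (fun _ => i) f) (Sum.elim (fun _ => j) g)

namespace SNP

variable {N : ℕ} {I : Type} [Fintype I] [DecidableEq I]

/-- products with a "column-delta" matrix on the left. -/
lemma mulL {A M : Matrix (I → Fin N) (I → Fin N) ℂ} {σ : (I → Fin N) → (I → Fin N)}
    {c : (I → Fin N) → ℂ} (hA : ∀ f g, A f g = if g = σ f then c f else 0) (f g : I → Fin N) :
    (A * M) f g = c f * M (σ f) g := by
  rw [Matrix.mul_apply]
  have : ∀ h, A f h * M h g = if h = σ f then c f * M h g else 0 := by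
    intro h; rw [hA]; split <;> simp
  simp only [this, Finset.sum_ite_eq', Finset.mem_univ, if_true]

/-- products with a "row-delta" matrix on the right. -/
lemma mulR {A M : Matrix (I → Fin N) (I → Fin N) ℂ} {τ : (I → Fin N) → (I → Fin N)}
    {d : (I → Fin N) → ℂ} (hA : ∀ f g, A f g = if f = τ g then d g else 0) (f g : I → Fin N) :
    (M * A) f g = M f (τ g) * d g := by
  rw [Matrix.mul_apply]
  have : ∀ h, M f h * A h g = if h = τ g then M f h * d g else 0 := by
    intro h; rw [hA]; split <;> simp
  simp only [this, Finset.sum_ite_eq', Finset.mem_univ, if_true]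

lemma permOp_col (p q : I) (f g : I → Fin N) :
    permOp N p q f g = if g = f ∘ ⇑(Equiv.swap p q) then 1 else 0 := by
  unfold permOp
  congr 1
  · simp only [eq_iff_iff]
    constructor <;> intro h
    · funext r
      rw [h]; simp
    · rw [h]; funext r; simp

section SiteV
variable (p q : I) (V : Matrix (Fin N) (Fin N) ℂ) (θ : ℂ) (vs : Fin N → ℂ)
variable (hVe : ∀ i j, V i j = if j = i.rev then vs i else 0)

section V
include hVe

lemma siteV_col (f g : I → Fin N) :
    siteOp N p V f g = if g = Function.update f p ((f p).rev) then vs (f p) else 0 := by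
  unfold siteOp
  rw [hVe]
  by_cases h : g = Function.update f p ((f p).rev)
  · subst h
    simp [Function.update_idem, Function.update_eq_self]
  · rcases eq_or_ne (Function.update g p (f p)) f with h1 | h1
    · rcases eq_or_ne (g p) ((f p).rev) with h2 | h2
      · exfalso; apply h
        funext r
        rcases eq_or_ne r p with rfl | hr
        · simpa using h2
        · rw [Function.update_of_ne hr]
          have := congrFun h1 r
          rwa [Function.update_of_ne hr] at this
      · simp [h1, h2, h]
    · simp [h1, h]

lemma siteV_row (f g : I → Fin N) :
    siteOp N p V f g = if f = Function.update g p ((g p).rev) then vs ((g p).rev) else 0 := by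
  rw [siteV_col p V vs hVe]
  by_cases h : g = Function.update f p ((f p).rev)
  · subst h
    simp [Function.update_idem, Function.update_eq_self, Fin.rev_rev]
  · rw [if_neg h, if_neg]
    intro h2
    apply h
    subst h2
    simp [Function.update_idem, Function.update_eq_self, Fin.rev_rev]

end V

lemma siteDiag (ζ : Fin N → ℂ) (f g : I → Fin N) :
    siteOp N p (Matrix.diagonal ζ) f g = if g = f then ζ (f p) else 0 := by
  unfold siteOp
  by_cases h : g = f
  · subst h; simp [Matrix.diagonal]
  · rcases eq_or_ne (Function.update g p (f p)) f with h1 | h1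
    · rcases eq_or_ne (g p) (f p) with h2 | h2
      · exfalso; apply h
        funext r
        rcases eq_or_ne r p with rfl | hr
        · exact h2
        · have := congrFun h1 r
          rwa [Function.update_of_ne hr] at this
      · rw [if_pos h1, if_neg h]
        exact Matrix.diagonal_apply_ne ζ (fun hh => h2 hh.symm)
    · simp [h1, h]


end SiteV

lemma VmulV {N : ℕ} {V : Matrix (Fin N) (Fin N) ℂ} {θ : ℂ} {vs : Fin N → ℂ}
    (hVe : ∀ i j, V i j = if j = i.rev then vs i else 0)
    (hvsθ : ∀ i, vs i * vs i.rev = θ) :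
    V * V = θ • (1 : Matrix (Fin N) (Fin N) ℂ) := by
  ext i j
  rw [Matrix.mul_apply]
  have : ∀ k, V i k * V k j = if k = i.rev then vs i * V k j else 0 := by
    intro k; rw [hVe]; split <;> simp
  rw [Finset.sum_congr rfl (fun k _ => this k), Finset.sum_ite_eq', if_pos (Finset.mem_univ _),
    hVe]
  by_cases h : i = j
  · subst h; simp [Fin.rev_rev, hvsθ i, Matrix.one_apply]
  · rw [if_neg (show ¬ j = i.rev.rev by rw [Fin.rev_rev]; exact fun hh => h hh.symm),
      Matrix.smul_apply, Matrix.one_apply_ne h, smul_zero, mul_zero]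

lemma Vinv {N : ℕ} {V : Matrix (Fin N) (Fin N) ℂ} {θ : ℂ} {vs : Fin N → ℂ}
    (hVe : ∀ i j, V i j = if j = i.rev then vs i else 0)
    (hvsθ : ∀ i, vs i * vs i.rev = θ) (hθ2 : θ * θ = 1) :
    V⁻¹ = θ • V := by
  apply Matrix.inv_eq_right_inv
  rw [Matrix.mul_smul, VmulV hVe hvsθ, smul_smul, hθ2, one_smul]

lemma gt_apply {N : ℕ} {I : Type} [Fintype I] [DecidableEq I] (p : I)
    {V : Matrix (Fin N) (Fin N) ℂ} {θ : ℂ} {vs : Fin N → ℂ}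
    (hVe : ∀ i j, V i j = if j = i.rev then vs i else 0)
    (hvsθ : ∀ i, vs i * vs i.rev = θ) (hθ2 : θ * θ = 1)
    (M : Matrix (I → Fin N) (I → Fin N) ℂ) (f g : I → Fin N) :
    gtransp V p M f g =
      θ * vs (f p) * vs ((g p).rev) *
        M (Function.update f p ((g p).rev)) (Function.update g p ((f p).rev)) := by
  have hVe' : ∀ i j, (θ • V) i j = if j = i.rev then θ * vs i else 0 := by
    intro i j; rw [Matrix.smul_apply, hVe]; split <;> simp
  rw [gtransp, Vinv hVe hvsθ hθ2,
    mulR (fun f g => siteV_row p V vs hVe f g),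
    mulL (fun f g => siteV_col p (θ • V) (fun i => θ * vs i) hVe' f g)]
  unfold ptransp
  simp only [Function.update_self, Function.update_idem]
  ring
lemma sum_eq_sum_image {α β : Type*} [Fintype α] [Fintype β] [DecidableEq β]
    (e : α → β) (he : Function.Injective e) (F : β → ℂ)
    (h0 : ∀ b, (∀ a, b ≠ e a) → F b = 0) : ∑ b, F b = ∑ a, F (e a) := by
  calc ∑ b, F b = ∑ b ∈ Finset.univ.image e, F b := by
        refine (Finset.sum_subset (Finset.subset_univ _) ?_).symm
        intro b _ hb
        exact h0 b (fun a hba => hb (Finset.mem_image.mpr ⟨a, Finset.mem_univ a, hba.symm⟩))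
    _ = ∑ a, F (e a) := Finset.sum_image (fun x _ y _ hxy => he hxy)

section Q
variable {N : ℕ} {I : Type} [Fintype I] [DecidableEq I] (p q : I)
    {V : Matrix (Fin N) (Fin N) ℂ} {θ : ℂ} {vs : Fin N → ℂ}
    (hpq : p ≠ q)
    (hVe : ∀ i j, V i j = if j = i.rev then vs i else 0)
    (hvsθ : ∀ i, vs i * vs i.rev = θ) (hθ2 : θ * θ = 1)

include hpq hVe hvsθ hθ2

lemma Qt_apply (h g : I → Fin N) :
    gtransp V p (permOp N p q) h g =
      if h = Function.update (Function.update g p (h p)) q ((h p).rev) ∧ g q = (g p).rev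
      then θ * vs (h p) * vs ((g p).rev) else 0 := by
  rw [gt_apply p hVe hvsθ hθ2]
  unfold permOp
  have key : (Function.update h p ((g p).rev) = Function.update g p ((h p).rev) ∘ ⇑(Equiv.swap p q))
      ↔ (h = Function.update (Function.update g p (h p)) q ((h p).rev) ∧ g q = (g p).rev) := by
    constructor
    · intro hh
      have hgq : g q = (g p).rev := by
        have hc := congrFun hh p
        rw [Function.update_self, Function.comp_apply, Equiv.swap_apply_left,
          Function.update_of_ne hpq.symm] at hc
        exact hc.symm
      have hq : h q = (h p).rev := by
        have hc := congrFun hh q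
        rwa [Function.update_of_ne hpq.symm, Function.comp_apply, Equiv.swap_apply_right,
          Function.update_self] at hc
      refine ⟨funext fun r => ?_, hgq⟩
      rcases eq_or_ne r q with rfl | hrq
      · rw [Function.update_self]; exact hq
      · rw [Function.update_of_ne hrq]
        rcases eq_or_ne r p with rfl | hrp
        · rw [Function.update_self]
        · rw [Function.update_of_ne hrp]
          have hc := congrFun hh r
          rwa [Function.update_of_ne hrp, Function.comp_apply,
            Equiv.swap_apply_of_ne_of_ne hrp hrq, Function.update_of_ne hrp] at hc
    · rintro ⟨hh, hgq⟩
      funext r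
      rw [Function.comp_apply]
      rcases eq_or_ne r p with rfl | hrp
      · rw [Function.update_self, Equiv.swap_apply_left, Function.update_of_ne hpq.symm, hgq]
      · rw [Function.update_of_ne hrp]
        rcases eq_or_ne r q with rfl | hrq
        · rw [Equiv.swap_apply_right, Function.update_self]
          conv_lhs => rw [hh]
          rw [Function.update_self]
        · rw [Equiv.swap_apply_of_ne_of_ne hrp hrq, Function.update_of_ne hrp]
          conv_lhs => rw [hh]
          rw [Function.update_of_ne hrq, Function.update_of_ne hrp]
  by_cases hc : h = Function.update (Function.update g p (h p)) q ((h p).rev) ∧ g q = (g p).rev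
  · rw [if_pos (key.mpr hc), if_pos hc, mul_one]
  · rw [if_neg (fun hx => hc (key.mp hx)), if_neg hc, mul_zero]

lemma mulQ (X : Matrix (I → Fin N) (I → Fin N) ℂ) (f g : I → Fin N) :
    (X * gtransp V p (permOp N p q)) f g =
      if g q = (g p).rev then
        ∑ y : Fin N,
          X f (Function.update (Function.update g p y) q y.rev) * (θ * vs y * vs ((g p).rev))
      else 0 := by
  rw [Matrix.mul_apply]
  have hep : ∀ y : Fin N, (Function.update (Function.update g p y) q y.rev) p = y := by
    intro y; rw [Function.update_of_ne hpq, Function.update_self]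
  by_cases hg : g q = (g p).rev
  · rw [if_pos hg]
    refine sum_eq_sum_image (fun y => Function.update (Function.update g p y) q y.rev)
      (fun y y' hyy' => by
        have := congrArg (fun u => u p) hyy'
        simpa [hep] using this)
      _ (fun h hh => ?_) |>.trans ?_
    · rw [Qt_apply p q hpq hVe hvsθ hθ2, if_neg, mul_zero]
      rintro ⟨h1, -⟩
      exact hh (h p) h1
    · refine Finset.sum_congr rfl (fun y _ => ?_)
      rw [Qt_apply p q hpq hVe hvsθ hθ2, hep, if_pos ⟨rfl, hg⟩]
  · rw [if_neg hg]
    refine Finset.sum_eq_zero (fun h _ => ?_)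
    rw [Qt_apply p q hpq hVe hvsθ hθ2, if_neg, mul_zero]
    rintro ⟨-, h2⟩
    exact hg h2

end Q
section Av
variable {N : ℕ} {I : Type} [Fintype I] [DecidableEq I]

/-- `M` acts as the identity on the tensor factor `q`. -/
def Av (q : I) (M : Matrix (I → Fin N) (I → Fin N) ℂ) : Prop :=
  (∀ f g, f q ≠ g q → M f g = 0) ∧
  (∀ f g x, f q = g q →
    M (Function.update f q x) (Function.update g q x) = M f g)

lemma update_eq_update_iff {q : I} {f g : I → Fin N} {x : Fin N} (hfg : f q = g q) :
    Function.update f q x = Function.update g q x ↔ f = g := by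
  constructor
  · intro h
    funext r
    rcases eq_or_ne r q with rfl | hrq
    · exact hfg
    · have := congrFun h r
      rwa [Function.update_of_ne hrq, Function.update_of_ne hrq] at this
  · rintro rfl; rfl

lemma Av.swapval {q : I} {M : Matrix (I → Fin N) (I → Fin N) ℂ} (hM : Av q M)
    {f g : I → Fin N} (hfg : f q = g q) (w : Fin N) :
    M f g = M (Function.update f q w) (Function.update g q w) := by
  have := hM.2 (Function.update f q w) (Function.update g q w) (f q) (by simp)
  rw [Function.update_idem, Function.update_idem, Function.update_eq_self, hfg,
    Function.update_eq_self] at this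
  exact this

lemma Av.one {q : I} : Av q (1 : Matrix (I → Fin N) (I → Fin N) ℂ) := by
  constructor
  · intro f g hfg
    exact Matrix.one_apply_ne (fun h => hfg (by rw [h]))
  · intro f g x hfg
    simp only [Matrix.one_apply, update_eq_update_iff hfg]

lemma Av.smul {q : I} {c : ℂ} {M : Matrix (I → Fin N) (I → Fin N) ℂ} (hM : Av q M) :
    Av q (c • M) := by
  refine ⟨fun f g hfg => ?_, fun f g x hfg => ?_⟩
  · rw [Matrix.smul_apply, hM.1 f g hfg, smul_zero]
  · rw [Matrix.smul_apply, Matrix.smul_apply, hM.2 f g x hfg]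

lemma Av.sub {q : I} {A B : Matrix (I → Fin N) (I → Fin N) ℂ} (hA : Av q A) (hB : Av q B) :
    Av q (A - B) := by
  refine ⟨fun f g hfg => ?_, fun f g x hfg => ?_⟩
  · rw [Matrix.sub_apply, hA.1 f g hfg, hB.1 f g hfg, sub_zero]
  · rw [Matrix.sub_apply, Matrix.sub_apply, hA.2 f g x hfg, hB.2 f g x hfg]

lemma Av.mul {q : I} {A B : Matrix (I → Fin N) (I → Fin N) ℂ} (hA : Av q A) (hB : Av q B) :
    Av q (A * B) := by
  constructor
  · intro f g hfg
    rw [Matrix.mul_apply]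
    refine Finset.sum_eq_zero (fun h _ => ?_)
    rcases eq_or_ne (f q) (h q) with he | he
    · rw [hB.1 h g (he ▸ hfg), mul_zero]
    · rw [hA.1 f h he, zero_mul]
  · intro f g x hfg
    rw [Matrix.mul_apply, Matrix.mul_apply]
    have inv : Function.Involutive
        (fun h : I → Fin N => Function.update h q ((Equiv.swap x (f q)) (h q))) := by
      intro h
      simp only [Function.update_self, Function.update_idem, Equiv.swap_apply_self,
        Function.update_eq_self]
    refine (Fintype.sum_equiv inv.toPerm _ _ (fun h => ?_)).symm
    show A f h * B h g =
      A (Function.update f q x) (Function.update h q (Equiv.swap x (f q) (h q))) *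
        B (Function.update h q (Equiv.swap x (f q) (h q))) (Function.update g q x)
    rcases eq_or_ne (h q) (f q) with he | he
    · rw [he, Equiv.swap_apply_right]
      rw [hA.2 f h x he.symm, hB.2 h g x (he.trans hfg)]
    · rcases eq_or_ne (h q) x with he2 | he2
      · rw [he2, Equiv.swap_apply_left,
          hA.1 f h (fun hh => he hh.symm), zero_mul,
          hB.1 (Function.update h q (f q)) (Function.update g q x) (by
            rw [Function.update_self, Function.update_self]
            exact fun hh => he (he2.trans hh.symm)), mul_zero]
      · rw [Equiv.swap_apply_of_ne_of_ne he2 he, Function.update_eq_self,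
          hA.1 f h (fun hh => he hh.symm), zero_mul,
          hA.1 (Function.update f q x) h (by
            rw [Function.update_self]
            exact fun hh => he2 hh.symm), zero_mul]

lemma av_permOp {q p r : I} (hqp : q ≠ p) (hqr : q ≠ r) :
    Av q (permOp N p r) := by
  have hswap : ∀ f : I → Fin N, (f ∘ ⇑(Equiv.swap p r)) q = f q := by
    intro f
    rw [Function.comp_apply, Equiv.swap_apply_of_ne_of_ne hqp hqr]
  have hcomp : ∀ (g : I → Fin N) (x : Fin N),
      Function.update g q x ∘ ⇑(Equiv.swap p r) =
        Function.update (g ∘ ⇑(Equiv.swap p r)) q x := by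
    intro g x
    funext s
    rw [Function.comp_apply, Function.update_apply, Function.update_apply]
    have : (Equiv.swap p r) s = q ↔ s = q := by
      constructor
      · intro h
        have := (Equiv.swap p r).injective (h.trans (Equiv.swap_apply_of_ne_of_ne hqp hqr).symm)
        exact this
      · rintro rfl; exact Equiv.swap_apply_of_ne_of_ne hqp hqr
    by_cases hs : s = q
    · rw [if_pos (this.mpr hs), if_pos hs]
    · rw [if_neg (fun hh => hs (this.mp hh)), if_neg hs, Function.comp_apply]
  constructor
  · intro f g hfg
    unfold permOp
    rw [if_neg]
    intro h
    exact hfg (by rw [h, hswap])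
  · intro f g x hfg
    unfold permOp
    rw [hcomp]
    have guard : f q = (g ∘ ⇑(Equiv.swap p r)) q := by rw [hswap]; exact hfg
    exact if_congr (update_eq_update_iff guard) rfl rfl

lemma av_siteOp {q r : I} (hrq : r ≠ q) (A : Matrix (Fin N) (Fin N) ℂ) :
    Av q (siteOp N r A) := by
  constructor
  · intro f g hfg
    unfold siteOp
    rw [if_neg]
    intro h
    have := congrFun h q
    rw [Function.update_of_ne (fun hh : q = r => hrq hh.symm)] at this
    exact hfg this.symm
  · intro f g x hfg
    unfold siteOp
    rw [Function.update_of_ne (fun hh : r = q => hrq hh),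
      Function.update_of_ne (fun hh : r = q => hrq hh)]
    have hcomm : Function.update (Function.update g q x) r (f r) =
        Function.update (Function.update g r (f r)) q x :=
      Function.update_comm (fun hh : q = r => hrq hh.symm) _ _ g
    rw [hcomm]
    have guard : (Function.update g r (f r)) q = f q := by
      rw [Function.update_of_ne (fun hh : q = r => hrq hh.symm)]; exact hfg.symm
    exact if_congr (update_eq_update_iff guard) rfl rfl

end Av
lemma funext_pq {α : Type*} {I : Type} [DecidableEq I] {p q : I} (hpq : p ≠ q) {f g : I → α}
    (hp : f p = g p) (hq : f q = g q) (ho : ∀ r, r ≠ p → r ≠ q → f r = g r) : f = g :=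
  funext fun r => by
    rcases eq_or_ne r p with rfl | h1
    · exact hp
    · rcases eq_or_ne r q with rfl | h2
      · exact hq
      · exact ho r h1 h2

lemma vs_rev {N : ℕ} {θ : ℂ} {vs : Fin N → ℂ} (hvsθ : ∀ i, vs i * vs i.rev = θ)
    (hvs2 : ∀ i, vs i * vs i = 1) (i : Fin N) : vs i.rev = θ * vs i := by
  linear_combination (vs i) * hvsθ i - (vs i.rev) * hvs2 i

section Core
variable {N : ℕ} {I : Type} [Fintype I] [DecidableEq I] {p q : I}
  {V : Matrix (Fin N) (Fin N) ℂ} {θ : ℂ} {vs : Fin N → ℂ}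
  (hpq : p ≠ q)
  (hVe : ∀ i j, V i j = if j = i.rev then vs i else 0)
  (hvsθ : ∀ i, vs i * vs i.rev = θ) (hθ2 : θ * θ = 1)
  (hvs2 : ∀ i, vs i * vs i = 1)

include hVe hvsθ hθ2

lemma gt_sub (A B : Matrix (I → Fin N) (I → Fin N) ℂ) :
    gtransp V p (A - B) = gtransp V p A - gtransp V p B := by
  ext f g
  rw [Matrix.sub_apply, gt_apply p hVe hvsθ hθ2, gt_apply p hVe hvsθ hθ2,
    gt_apply p hVe hvsθ hθ2, Matrix.sub_apply]
  ring

lemma gt_add (A B : Matrix (I → Fin N) (I → Fin N) ℂ) :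
    gtransp V p (A + B) = gtransp V p A + gtransp V p B := by
  ext f g
  rw [Matrix.add_apply, gt_apply p hVe hvsθ hθ2, gt_apply p hVe hvsθ hθ2,
    gt_apply p hVe hvsθ hθ2, Matrix.add_apply]
  ring

lemma gt_smul (c : ℂ) (A : Matrix (I → Fin N) (I → Fin N) ℂ) :
    gtransp V p (c • A) = c • gtransp V p A := by
  ext f g
  rw [Matrix.smul_apply, gt_apply p hVe hvsθ hθ2, gt_apply p hVe hvsθ hθ2, Matrix.smul_apply]
  simp only [smul_eq_mul]
  ring

lemma gt_one : gtransp V p (1 : Matrix (I → Fin N) (I → Fin N) ℂ) = 1 := by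
  ext f g
  rw [gt_apply p hVe hvsθ hθ2]
  by_cases h : f = g
  · subst h
    rw [Matrix.one_apply_eq, Matrix.one_apply_eq, mul_one, mul_assoc, hvsθ, hθ2]
  · rw [Matrix.one_apply_ne h, Matrix.one_apply_ne, mul_zero]
    intro hc
    apply h
    funext r
    rcases eq_or_ne r p with rfl | hr
    · have := congrFun hc r
      rw [Function.update_self, Function.update_self] at this
      exact Fin.rev_injective this.symm
    · have := congrFun hc r
      rwa [Function.update_of_ne hr, Function.update_of_ne hr] at this

omit [Fintype I] in
lemma gt_diag {ε : ℂ} {ζ : Fin N → ℂ} (hζ : ∀ k : Fin N, ζ k.rev = ε * ζ k) [Fintype I] :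
    gtransp V p (siteOp N p (Matrix.diagonal ζ)) = ε • siteOp N p (Matrix.diagonal ζ) := by
  ext f g
  rw [gt_apply p hVe hvsθ hθ2, Matrix.smul_apply, siteDiag p ζ, siteDiag p ζ, smul_eq_mul]
  by_cases h : g = f
  · subst h
    rw [if_pos, if_pos rfl, Function.update_self]
    · linear_combination (θ * vs (g p) * vs ((g p).rev)) * hζ (g p) +
        (ε * ζ (g p) * θ) * hvsθ (g p) + (ε * ζ (g p)) * hθ2
    · rfl
  · rw [if_neg h, mul_zero, if_neg, mul_zero]
    intro hc
    apply h
    funext r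
    rcases eq_or_ne r p with rfl | hr
    · have := congrFun hc r
      rw [Function.update_self, Function.update_self] at this
      exact (Fin.rev_injective this).symm
    · have := congrFun hc r
      rwa [Function.update_of_ne hr, Function.update_of_ne hr] at this

include hpq

lemma core_c1 {M : Matrix (I → Fin N) (I → Fin N) ℂ} (hM : Av q M) :
    gtransp V p (permOp N p q * M) =
      gtransp V p M * gtransp V p (permOp N p q) := by
  ext f g
  rw [gt_apply p hVe hvsθ hθ2, mulL (fun f g => permOp_col p q f g),
    mulQ p q hpq hVe hvsθ hθ2]
  by_cases hgq : g q = (g p).rev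
  · rw [if_pos hgq]
    rw [Finset.sum_eq_single ((f q).rev)]
    · rw [gt_apply p hVe hvsθ hθ2]
      simp only [Fin.rev_rev]
      rw [show (Function.update (Function.update g p ((f q).rev)) q (f q)) p = (f q).rev from by
        rw [Function.update_of_ne hpq, Function.update_self]]
      simp only [Fin.rev_rev]
      have harg : M (Function.update f p ((g p).rev) ∘ ⇑(Equiv.swap p q))
            (Function.update g p ((f p).rev)) =
          M (Function.update f p (f q))
            (Function.update (Function.update (Function.update g p ((f q).rev)) q (f q)) p
              ((f p).rev)) := by
        have hguard : (Function.update f p ((g p).rev) ∘ ⇑(Equiv.swap p q)) q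
            = (Function.update g p ((f p).rev)) q := by
          rw [Function.comp_apply, Equiv.swap_apply_right, Function.update_self,
            Function.update_of_ne hpq.symm, hgq]
        rw [hM.swapval hguard (f q)]
        congr 1
        · refine funext_pq hpq ?_ ?_ (fun r h1 h2 => ?_)
          · simp [Function.update_apply, hpq, hpq.symm, Equiv.swap_apply_left]
          · simp [Function.update_apply, hpq, hpq.symm, Equiv.swap_apply_right]
          · simp [Function.update_apply, h1, h2, Equiv.swap_apply_of_ne_of_ne h1 h2]
        · refine funext_pq hpq ?_ ?_ (fun r h1 h2 => ?_)
          · simp [Function.update_apply, hpq, hpq.symm]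
          · simp [Function.update_apply, hpq, hpq.symm]
          · simp [Function.update_apply, h1, h2]
      rw [harg]
      set m := M (Function.update f p (f q))
            (Function.update (Function.update (Function.update g p ((f q).rev)) q (f q)) p
              ((f p).rev)) with hm
      linear_combination (-(θ * θ * vs (f p) * vs ((g p).rev) * m)) * hvsθ (f q) +
        (-(θ * vs (f p) * vs ((g p).rev) * m)) * hθ2
    · intro y _ hy
      rw [gt_apply p hVe hvsθ hθ2]
      refine mul_eq_zero_of_left (mul_eq_zero_of_right _ (hM.1 _ _ ?_)) _
      rw [Function.update_of_ne hpq.symm, Function.update_of_ne hpq.symm,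
        Function.update_self]
      exact fun hc => hy (by rw [hc, Fin.rev_rev])
    · intro hmem
      exact absurd (Finset.mem_univ _) hmem
  · rw [if_neg hgq, one_mul]
    refine mul_eq_zero_of_right _ (hM.1 _ _ ?_)
    rw [Function.comp_apply, Equiv.swap_apply_right, Function.update_self,
      Function.update_of_ne hpq.symm]
    exact fun hc => hgq hc.symm


include hvs2

lemma core_c2 {M : Matrix (I → Fin N) (I → Fin N) ℂ} (hM : Av q M) :
    gtransp V p (M * gtransp V p (permOp N p q)) =
      permOp N p q * gtransp V p M := by
  have hvr : ∀ i, vs i.rev = θ * vs i := fun i => vs_rev hvsθ hvs2 i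
  ext f g
  rw [gt_apply p hVe hvsθ hθ2, mulQ p q hpq hVe hvsθ hθ2 M,
    mulL (fun f g => permOp_col p q f g), one_mul, gt_apply p hVe hvsθ hθ2]
  rw [Function.update_of_ne hpq.symm, Function.update_self, Fin.rev_rev]
  by_cases hc : g q = f p
  · rw [if_pos hc]
    rw [Finset.sum_eq_single ((f q).rev)]
    · simp only [Fin.rev_rev]
      -- identify M entries
      have harg : M (Function.update f p ((g p).rev))
            (Function.update (Function.update (Function.update g p ((f p).rev)) p ((f q).rev)) q
              (f q)) =
          M (Function.update (f ∘ ⇑(Equiv.swap p q)) p ((g p).rev))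
            (Function.update g p (((f ∘ ⇑(Equiv.swap p q)) p).rev)) := by
        have hguard : (Function.update (f ∘ ⇑(Equiv.swap p q)) p ((g p).rev)) q
            = (Function.update g p (((f ∘ ⇑(Equiv.swap p q)) p).rev)) q := by
          rw [Function.update_of_ne hpq.symm, Function.update_of_ne hpq.symm,
            Function.comp_apply, Equiv.swap_apply_right, hc]
        rw [hM.swapval hguard (f q)]
        congr 1
        · refine funext_pq hpq ?_ ?_ (fun r h1 h2 => ?_)
          · simp [Function.update_apply, hpq, hpq.symm]
          · simp [Function.update_apply, hpq, hpq.symm, Equiv.swap_apply_right]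
          · simp [Function.update_apply, h1, h2, Equiv.swap_apply_of_ne_of_ne h1 h2]
        · refine funext_pq hpq ?_ ?_ (fun r h1 h2 => ?_)
          · simp [Function.update_apply, hpq, hpq.symm, Equiv.swap_apply_left]
          · simp [Function.update_apply, hpq, hpq.symm]
          · simp [Function.update_apply, h1, h2]
      rw [harg]
      set m := M (Function.update (f ∘ ⇑(Equiv.swap p q)) p ((g p).rev))
            (Function.update g p (((f ∘ ⇑(Equiv.swap p q)) p).rev)) with hm
      rw [show (f ∘ ⇑(Equiv.swap p q)) p = f q from by
        rw [Function.comp_apply, Equiv.swap_apply_left]]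
      linear_combination (θ * θ * vs (f p) * vs (f p) * vs ((g p).rev) * m) * hvr (f q) +
        (θ * θ * θ * vs ((g p).rev) * m * vs (f q)) * hvs2 (f p) +
        (θ * vs ((g p).rev) * m * vs (f q)) * hθ2
    · intro y _ hy
      refine mul_eq_zero_of_left (hM.1 _ _ ?_) _
      rw [Function.update_of_ne hpq.symm, Function.update_self]
      exact fun hc2 => hy (by rw [hc2, Fin.rev_rev])
    · intro hmem
      exact absurd (Finset.mem_univ _) hmem
  · rw [if_neg hc, mul_zero]
    refine (mul_eq_zero_of_right _ (hM.1 _ _ ?_)).symm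
    rw [Function.update_of_ne hpq.symm, Function.update_of_ne hpq.symm,
      Function.comp_apply, Equiv.swap_apply_right]
    exact fun hc2 => hc hc2.symm

lemma core_c3 {M : Matrix (I → Fin N) (I → Fin N) ℂ} (hM : Av q M) :
    gtransp V p (permOp N p q * M * gtransp V p (permOp N p q)) =
      θ • (permOp N p q * M) := by
  have hvr : ∀ i, vs i.rev = θ * vs i := fun i => vs_rev hvsθ hvs2 i
  ext f g
  rw [gt_apply p hVe hvsθ hθ2, mulQ p q hpq hVe hvsθ hθ2 (permOp N p q * M),
    Matrix.smul_apply, mulL (fun f g => permOp_col p q f g), one_mul, smul_eq_mul]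
  rw [Function.update_of_ne hpq.symm, Function.update_self, Fin.rev_rev]
  by_cases hc : g q = f p
  · rw [if_pos hc]
    rw [Finset.sum_eq_single (g p)]
    · rw [mulL (fun f g => permOp_col p q f g), one_mul]
      have harg : M (Function.update f p ((g p).rev) ∘ ⇑(Equiv.swap p q))
            (Function.update (Function.update (Function.update g p ((f p).rev)) p (g p)) q
              ((g p).rev)) =
          M (f ∘ ⇑(Equiv.swap p q)) g := by
        have hg1 : (Function.update f p ((g p).rev) ∘ ⇑(Equiv.swap p q)) q
            = (Function.update (Function.update (Function.update g p ((f p).rev)) p (g p)) q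
              ((g p).rev)) q := by
          rw [Function.comp_apply, Equiv.swap_apply_right, Function.update_self,
            Function.update_self]
        have hg2 : (f ∘ ⇑(Equiv.swap p q)) q = g q := by
          rw [Function.comp_apply, Equiv.swap_apply_right, hc]
        rw [hM.swapval hg1 (f q), hM.swapval hg2 (f q)]
        congr 1
        · refine funext_pq hpq ?_ ?_ (fun r h1 h2 => ?_)
          · simp [Function.update_apply, hpq, hpq.symm, Equiv.swap_apply_left]
          · simp [Function.update_apply, hpq, hpq.symm, Equiv.swap_apply_right]
          · simp [Function.update_apply, h1, h2, Equiv.swap_apply_of_ne_of_ne h1 h2]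
        · refine funext_pq hpq ?_ ?_ (fun r h1 h2 => ?_)
          · simp [Function.update_apply, hpq, hpq.symm]
          · simp [Function.update_apply, hpq, hpq.symm]
          · simp [Function.update_apply, h1, h2]
      rw [harg]
      set m := M (f ∘ ⇑(Equiv.swap p q)) g with hm
      linear_combination (θ * θ * vs (f p) * vs (f p) * vs (g p) * m) * hvr (g p) +
        (θ * θ * θ * vs (g p) * vs (g p) * m) * hvs2 (f p) +
        (θ * θ * θ * m) * hvs2 (g p) + (θ * m) * hθ2
    · intro y _ hy
      refine mul_eq_zero_of_left ?_ _
      rw [mulL (fun f g => permOp_col p q f g), one_mul]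
      refine hM.1 _ _ ?_
      rw [Function.comp_apply, Equiv.swap_apply_right, Function.update_self,
        Function.update_self]
      exact fun hc2 => hy (Fin.rev_injective hc2).symm
    · intro hmem
      exact absurd (Finset.mem_univ _) hmem
  · rw [if_neg hc, mul_zero]
    refine (mul_eq_zero_of_right θ (hM.1 _ _ ?_)).symm
    rw [Function.comp_apply, Equiv.swap_apply_right]
    exact fun hc2 => hc hc2.symm

lemma gt_invol (M : Matrix (I → Fin N) (I → Fin N) ℂ) :
    gtransp V p (gtransp V p M) = M := by
  ext f g
  rw [gt_apply p hVe hvsθ hθ2, gt_apply p hVe hvsθ hθ2]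
  simp only [Function.update_self, Function.update_idem, Fin.rev_rev,
    Function.update_eq_self]
  linear_combination (θ * θ * vs ((g p).rev) * vs ((g p).rev) * M f g) * hvs2 (f p) +
    (θ * θ * M f g) * hvs2 ((g p).rev) + (M f g) * hθ2

lemma av_gt {M : Matrix (I → Fin N) (I → Fin N) ℂ} (hM : Av q M) :
    Av q (gtransp V p M) := by
  constructor
  · intro f g hfg
    rw [gt_apply p hVe hvsθ hθ2]
    refine mul_eq_zero_of_right _ (hM.1 _ _ ?_)
    rw [Function.update_of_ne hpq.symm, Function.update_of_ne hpq.symm]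
    exact hfg
  · intro f g x hfg
    rw [gt_apply p hVe hvsθ hθ2, gt_apply p hVe hvsθ hθ2]
    simp only [Function.update_of_ne hpq]
    rw [Function.update_comm (show q ≠ p from hpq.symm) x ((g p).rev) f,
      Function.update_comm (show q ≠ p from hpq.symm) x ((f p).rev) g]
    rw [hM.2 _ _ x (by
      rw [Function.update_of_ne hpq.symm, Function.update_of_ne hpq.symm]; exact hfg)]

lemma core_c4 {M : Matrix (I → Fin N) (I → Fin N) ℂ} (hM : Av q M) :
    permOp N p q * gtransp V p M * gtransp V p (permOp N p q) =
      θ • (M * gtransp V p (permOp N p q)) := by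
  have h3 := core_c3 hpq hVe hvsθ hθ2 hvs2 (av_gt hpq hVe hvsθ hθ2 hvs2 hM)
  have := congrArg (gtransp V p) h3
  rw [gt_invol hpq hVe hvsθ hθ2 hvs2, gt_smul hVe hvsθ hθ2,
    core_c1 hpq hVe hvsθ hθ2 (av_gt hpq hVe hvsθ hθ2 hvs2 hM),
    gt_invol hpq hVe hvsθ hθ2 hvs2] at this
  exact this

omit hpq hVe hvsθ hθ2 hvs2 in
lemma expand_LQ {n : Type*} [Fintype n] [DecidableEq n] (x y : ℂ) (P' A Q' : Matrix n n ℂ) :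
    (1 - x • P') * A * (1 - y • Q') =
      A - x • (P' * A) - y • (A * Q') + (x * y) • (P' * A * Q') := by
  have h1 : (1 - x • P') * A = A - x • (P' * A) := by
    rw [sub_mul, one_mul, smul_mul_assoc]
  rw [h1, sub_mul, mul_sub, mul_sub, mul_one, mul_one, mul_smul_comm, mul_smul_comm,
    smul_mul_assoc, smul_smul]
  module

lemma step_core (α β c ε : ℂ) (hscal : c * (β - α) = θ * (α * β))
    {M M' : Matrix (I → Fin N) (I → Fin N) ℂ} (hM : Av q M) (hM' : Av q M')
    (hIH : gtransp V p M = (ε - c) • M' + c • M) :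
    gtransp V p ((1 - α • permOp N p q) * M * (1 - β • gtransp V p (permOp N p q))) =
      (ε - c) • ((1 - β • permOp N p q) * M' * (1 - α • gtransp V p (permOp N p q))) +
      c • ((1 - α • permOp N p q) * M * (1 - β • gtransp V p (permOp N p q))) := by
  have hR1 : (ε - c) • (permOp N p q * M' * gtransp V p (permOp N p q)) +
      c • (permOp N p q * M * gtransp V p (permOp N p q)) =
      θ • (M * gtransp V p (permOp N p q)) := by
    have h4 := core_c4 hpq hVe hvsθ hθ2 hvs2 hM
    rw [hIH, mul_add, add_mul, mul_smul_comm, mul_smul_comm, smul_mul_assoc,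
      smul_mul_assoc] at h4
    exact h4
  rw [expand_LQ α β (permOp N p q) M (gtransp V p (permOp N p q)),
    expand_LQ β α (permOp N p q) M' (gtransp V p (permOp N p q))]
  rw [gt_add hVe hvsθ hθ2, gt_sub hVe hvsθ hθ2, gt_sub hVe hvsθ hθ2,
    gt_smul hVe hvsθ hθ2, gt_smul hVe hvsθ hθ2, gt_smul hVe hvsθ hθ2,
    core_c3 hpq hVe hvsθ hθ2 hvs2 hM,
    core_c1 hpq hVe hvsθ hθ2 hM,
    core_c2 hpq hVe hvsθ hθ2 hvs2 hM, hIH]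
  rw [add_mul, smul_mul_assoc, smul_mul_assoc, mul_add, mul_smul_comm, mul_smul_comm]
  linear_combination (norm := module)
    hscal • (M * gtransp V p (permOp N p q) - permOp N p q * M) - (α * β : ℂ) • hR1

end Core
section ConcreteV
variable {N : ℕ}

lemma rev_iff {i j : Fin N} : (i : ℕ) + (j : ℕ) + 1 = N ↔ j = i.rev := by
  rw [Fin.ext_iff, Fin.val_rev]
  have := i.isLt
  have := j.isLt
  omega

lemma Vplus_entry (i j : Fin N) :
    Vplus N i j = if j = i.rev then (fun _ : Fin N => (1:ℂ)) i else 0 := by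
  unfold Vplus
  exact if_congr rev_iff rfl rfl

lemma Vminus_entry (i j : Fin N) :
    Vminus N i j =
      if j = i.rev then (fun k : Fin N => if 2 * (k : ℕ) < N then (1:ℂ) else -1) i else 0 := by
  unfold Vminus
  exact if_congr rev_iff rfl rfl

lemma vsplus_sq (i : Fin N) : (fun _ : Fin N => (1:ℂ)) i * (fun _ : Fin N => (1:ℂ)) i = 1 := by
  norm_num

lemma vsplus_theta (i : Fin N) :
    (fun _ : Fin N => (1:ℂ)) i * (fun _ : Fin N => (1:ℂ)) i.rev = 1 := by
  norm_num

lemma vsminus_sq (i : Fin N) :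
    (fun k : Fin N => if 2 * (k : ℕ) < N then (1:ℂ) else -1) i *
      (fun k : Fin N => if 2 * (k : ℕ) < N then (1:ℂ) else -1) i = 1 := by
  by_cases h : 2 * (i : ℕ) < N <;> simp [h]

lemma vsminus_theta (hN : Even N) (i : Fin N) :
    (fun k : Fin N => if 2 * (k : ℕ) < N then (1:ℂ) else -1) i *
      (fun k : Fin N => if 2 * (k : ℕ) < N then (1:ℂ) else -1) i.rev = -1 := by
  obtain ⟨k, hk⟩ := hN
  have hi := i.isLt
  have hrev : (i.rev : ℕ) = N - (i + 1) := Fin.val_rev i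
  show (if 2 * (i:ℕ) < N then (1:ℂ) else -1) * (if 2 * ((i.rev : Fin N) : ℕ) < N then (1:ℂ) else -1) = -1
  rw [hrev]
  by_cases h : 2 * (i : ℕ) < N
  · rw [if_pos h, if_neg (by omega), one_mul]
  · rw [if_neg h, if_pos (by omega), mul_one]
    

end ConcreteV
/-- Partial monodromy over a list of sites. -/
def Tl (N ℓ : ℕ) (hbar : ℂ) (a : Fin ℓ → ℂ) (l : List (Fin ℓ)) (x : ℂ) :
    Matrix ((Unit ⊕ Fin ℓ) → Fin N) ((Unit ⊕ Fin ℓ) → Fin N) ℂ :=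
  (l.map (fun n => Rmat N hbar (Sum.inl ()) (Sum.inr n) (x + a n))).prod

lemma av_Tl {N ℓ : ℕ} (hbar : ℂ) (a : Fin ℓ → ℂ) (n : Fin ℓ) (l : List (Fin ℓ))
    (hn : n ∉ l) (x : ℂ) : Av (Sum.inr n) (Tl N ℓ hbar a l x) := by
  induction l with
  | nil => exact Av.one
  | cons m t ih =>
    have h1 : n ≠ m := fun h => hn (List.mem_cons.mpr (Or.inl h))
    have h2 : n ∉ t := fun h => hn (List.mem_cons_of_mem m h)
    show Av (Sum.inr n)
      ((Rmat N hbar (Sum.inl ()) (Sum.inr m) (x + a m)) * Tl N ℓ hbar a t x)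
    refine Av.mul ?_ (ih h2)
    unfold Rmat
    refine Av.sub Av.one (Av.smul (av_permOp ?_ ?_))
    · simp
    · exact fun h => h1 (Sum.inr_injective h)

lemma key {N ℓ : ℕ} {V : Matrix (Fin N) (Fin N) ℂ} {θ ε : ℂ} {vs : Fin N → ℂ}
    (hVe : ∀ i j, V i j = if j = i.rev then vs i else 0)
    (hvsθ : ∀ i, vs i * vs i.rev = θ) (hθ2 : θ * θ = 1) (hvs2 : ∀ i, vs i * vs i = 1)
    (hbar : ℂ) (a : Fin ℓ → ℂ) (ζ : Fin N → ℂ) (hζ : ∀ k : Fin N, ζ k.rev = ε * ζ k)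
    (lam mu : ℂ) (hne : lam - mu ≠ 0) :
    ∀ l : List (Fin ℓ), l.Nodup → (∀ n ∈ l, lam + a n ≠ 0 ∧ mu + a n ≠ 0) →
    gtransp V (Sum.inl ()) (Tl N ℓ hbar a l lam *
        siteOp N (Sum.inl ()) (Matrix.diagonal ζ) *
        gtransp V (Sum.inl ()) (Tl N ℓ hbar a l mu)) =
      (ε - θ * hbar / (lam - mu)) • (Tl N ℓ hbar a l mu *
        siteOp N (Sum.inl ()) (Matrix.diagonal ζ) *
        gtransp V (Sum.inl ()) (Tl N ℓ hbar a l lam)) +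
      (θ * hbar / (lam - mu)) • (Tl N ℓ hbar a l lam *
        siteOp N (Sum.inl ()) (Matrix.diagonal ζ) *
        gtransp V (Sum.inl ()) (Tl N ℓ hbar a l mu)) := by
  intro l
  induction l with
  | nil =>
    intro _ _
    show gtransp V (Sum.inl ()) ((1 : Matrix _ _ ℂ) * _ * gtransp V (Sum.inl ()) 1) = _
    rw [gt_one hVe hvsθ hθ2, one_mul, mul_one, gt_diag hVe hvsθ hθ2 hζ]
    show _ = (ε - θ * hbar / (lam - mu)) • ((1 : Matrix _ _ ℂ) * _ * gtransp V (Sum.inl ()) 1)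
      + (θ * hbar / (lam - mu)) • ((1 : Matrix _ _ ℂ) * _ * gtransp V (Sum.inl ()) 1)
    rw [gt_one hVe hvsθ hθ2, one_mul, mul_one]
    module
  | cons n t ih =>
    intro hl hden
    have hnt : n ∉ t := (List.nodup_cons.mp hl).1
    have hIH := ih (List.nodup_cons.mp hl).2
      (fun m hm => hden m (List.mem_cons_of_mem n hm))
    have hdn := hden n List.mem_cons_self
    have hpq : (Sum.inl () : Unit ⊕ Fin ℓ) ≠ Sum.inr n := by simp
    have hT : ∀ x : ℂ, Tl N ℓ hbar a (n :: t) x =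
        (1 - (hbar / (x + a n)) • permOp N (Sum.inl ()) (Sum.inr n)) * Tl N ℓ hbar a t x := by
      intro x
      show (Rmat N hbar (Sum.inl ()) (Sum.inr n) (x + a n)) * Tl N ℓ hbar a t x = _
      rw [Rmat]
    have hgt : ∀ x : ℂ, gtransp V (Sum.inl ())
        ((1 - (hbar / (x + a n)) • permOp N (Sum.inl ()) (Sum.inr n)) * Tl N ℓ hbar a t x) =
        gtransp V (Sum.inl ()) (Tl N ℓ hbar a t x) *
          (1 - (hbar / (x + a n)) • gtransp V (Sum.inl ())
            (permOp N (Sum.inl ()) (Sum.inr n))) := by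
      intro x
      rw [sub_mul, one_mul, smul_mul_assoc, gt_sub hVe hvsθ hθ2, gt_smul hVe hvsθ hθ2,
        core_c1 hpq hVe hvsθ hθ2 (av_Tl hbar a n t hnt x), mul_sub, mul_one, mul_smul_comm]
    have hMav : Av (Sum.inr n) (Tl N ℓ hbar a t lam *
        siteOp N (Sum.inl ()) (Matrix.diagonal ζ) *
        gtransp V (Sum.inl ()) (Tl N ℓ hbar a t mu)) :=
      ((av_Tl hbar a n t hnt lam).mul (av_siteOp hpq _)).mul
        (av_gt hpq hVe hvsθ hθ2 hvs2 (av_Tl hbar a n t hnt mu))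
    have hM'av : Av (Sum.inr n) (Tl N ℓ hbar a t mu *
        siteOp N (Sum.inl ()) (Matrix.diagonal ζ) *
        gtransp V (Sum.inl ()) (Tl N ℓ hbar a t lam)) :=
      ((av_Tl hbar a n t hnt mu).mul (av_siteOp hpq _)).mul
        (av_gt hpq hVe hvsθ hθ2 hvs2 (av_Tl hbar a n t hnt lam))
    have hscal : (θ * hbar / (lam - mu)) * (hbar / (mu + a n) - hbar / (lam + a n)) =
        θ * ((hbar / (lam + a n)) * (hbar / (mu + a n))) := by
      obtain ⟨hd1, hd2⟩ := hdn
      field_simp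
      ring
    have e1 : Tl N ℓ hbar a (n :: t) lam * siteOp N (Sum.inl ()) (Matrix.diagonal ζ) *
        gtransp V (Sum.inl ()) (Tl N ℓ hbar a (n :: t) mu) =
        (1 - (hbar / (lam + a n)) • permOp N (Sum.inl ()) (Sum.inr n)) *
          (Tl N ℓ hbar a t lam * siteOp N (Sum.inl ()) (Matrix.diagonal ζ) *
            gtransp V (Sum.inl ()) (Tl N ℓ hbar a t mu)) *
          (1 - (hbar / (mu + a n)) • gtransp V (Sum.inl ())
            (permOp N (Sum.inl ()) (Sum.inr n))) := by
      rw [hT lam, hT mu, hgt mu]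
      simp only [Matrix.mul_assoc]
    have e2 : Tl N ℓ hbar a (n :: t) mu * siteOp N (Sum.inl ()) (Matrix.diagonal ζ) *
        gtransp V (Sum.inl ()) (Tl N ℓ hbar a (n :: t) lam) =
        (1 - (hbar / (mu + a n)) • permOp N (Sum.inl ()) (Sum.inr n)) *
          (Tl N ℓ hbar a t mu * siteOp N (Sum.inl ()) (Matrix.diagonal ζ) *
            gtransp V (Sum.inl ()) (Tl N ℓ hbar a t lam)) *
          (1 - (hbar / (lam + a n)) • gtransp V (Sum.inl ())
            (permOp N (Sum.inl ()) (Sum.inr n))) := by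
      rw [hT mu, hT lam, hgt lam]
      simp only [Matrix.mul_assoc]
    rw [e1, e2]
    exact step_core hpq hVe hvsθ hθ2 hvs2 (hbar / (lam + a n)) (hbar / (mu + a n))
      (θ * hbar / (lam - mu)) ε hscal hMav hM'av hIH

lemma final {N ℓ : ℕ} (hbar ρ : ℂ) (a : Fin ℓ → ℂ) {V : Matrix (Fin N) (Fin N) ℂ}
    {θ ε : ℂ} {vs : Fin N → ℂ}
    (hVe : ∀ i j, V i j = if j = i.rev then vs i else 0)
    (hvsθ : ∀ i, vs i * vs i.rev = θ) (hθ2 : θ * θ = 1) (hvs2 : ∀ i, vs i * vs i = 1)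
    (ζ : Fin N → ℂ) (hζ : ∀ k : Fin N, ζ k.rev = ε * ζ k)
    (lam : ℂ) (hcr : 2 * lam + hbar * ρ ≠ 0)
    (hpol : ∀ n : Fin ℓ, lam + a n ≠ 0 ∧ -lam - hbar * ρ + a n ≠ 0) :
    gtransp V (Sum.inl () : Unit ⊕ Fin ℓ) (Smat N ℓ hbar ρ a V ζ lam) =
      ε • Smat N ℓ hbar ρ a V ζ (-lam - hbar * ρ) -
        (θ * hbar / (2 * lam + hbar * ρ)) •
          (Smat N ℓ hbar ρ a V ζ (-lam - hbar * ρ) - Smat N ℓ hbar ρ a V ζ lam) := by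
  have hne : lam - (-lam - hbar * ρ) ≠ 0 := by
    rw [show lam - (-lam - hbar * ρ) = 2 * lam + hbar * ρ from by ring]
    exact hcr
  have hkey := key hVe hvsθ hθ2 hvs2 hbar a ζ hζ lam (-lam - hbar * ρ) hne
    (List.finRange ℓ) (List.nodup_finRange ℓ) (fun n _ => hpol n)
  rw [show lam - (-lam - hbar * ρ) = 2 * lam + hbar * ρ from by ring] at hkey
  have hSlam : Smat N ℓ hbar ρ a V ζ lam = Tl N ℓ hbar a (List.finRange ℓ) lam *
      siteOp N (Sum.inl ()) (Matrix.diagonal ζ) *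
      gtransp V (Sum.inl ()) (Tl N ℓ hbar a (List.finRange ℓ) (-lam - hbar * ρ)) := rfl
  have hSmu : Smat N ℓ hbar ρ a V ζ (-lam - hbar * ρ) =
      Tl N ℓ hbar a (List.finRange ℓ) (-lam - hbar * ρ) *
      siteOp N (Sum.inl ()) (Matrix.diagonal ζ) *
      gtransp V (Sum.inl ()) (Tl N ℓ hbar a (List.finRange ℓ) lam) := by
    unfold Smat
    rw [show -(-lam - hbar * ρ) - hbar * ρ = lam from by ring]
    rfl
  rw [hSlam, hSmu, hkey]
  module

end SNP

/-- the symmetry relation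
`S^{t_a}(λ) = ε S(−λ−ħρ) − (θħ/(2λ+ħρ)) (S(−λ−ħρ) − S(λ))`. -/
theorem snp_symmetry_relation (N ℓ : ℕ) (hN : 2 ≤ N) (hℓ : 1 ≤ ℓ)
    (hbar : ℂ) (hhbar : hbar ≠ 0) (ρ θ ε : ℂ)
    (V : Matrix (Fin N) (Fin N) ℂ)
    (hV : (V = Vplus N ∧ θ = 1) ∨ (Even N ∧ V = Vminus N ∧ θ = -1))
    (hε : ε = 1 ∨ ε = -1)
    (ζ : Fin N → ℂ) (hζ0 : ∀ k, ζ k ≠ 0) (hζ : ∀ k : Fin N, ζ k.rev = ε * ζ k)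
    (a : Fin ℓ → ℂ) (lam : ℂ) (hcr : 2 * lam + hbar * ρ ≠ 0)
    (hpol : ∀ n : Fin ℓ, lam + a n ≠ 0 ∧ -lam - hbar * ρ + a n ≠ 0) :
    gtransp V (Sum.inl () : Unit ⊕ Fin ℓ) (Smat N ℓ hbar ρ a V ζ lam) =
      ε • Smat N ℓ hbar ρ a V ζ (-lam - hbar * ρ) -
        (θ * hbar / (2 * lam + hbar * ρ)) •
          (Smat N ℓ hbar ρ a V ζ (-lam - hbar * ρ) - Smat N ℓ hbar ρ a V ζ lam) := by
  rcases hV with ⟨hVp, hθ1⟩ | ⟨hNeven, hVm, hθm⟩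
  · subst hVp
    subst hθ1
    exact SNP.final hbar ρ a SNP.Vplus_entry SNP.vsplus_theta (by norm_num) SNP.vsplus_sq
      ζ hζ lam hcr hpol
  · subst hVm
    subst hθm
    exact SNP.final hbar ρ a SNP.Vminus_entry (SNP.vsminus_theta hNeven) (by norm_num)
      SNP.vsminus_sq ζ hζ lam hcr hpol
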